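/- Let (X, 𝓑) be a primitive uniform space and let F : X → 2^X be a multivalued mapping with nonempty values such that for every x ∈ X the centre c_𝓑(F(x)) is a singleton contained in F(x). Define f : X → X by letting f(x) be the unique element of c_𝓑(F(x)). Assume Y ⊆ X is nonempty, f(Y) ⊆ Y, x ∈ c_𝓑(f, Y), and f(Y ∩ B(x)) ⊆ B(f(x)) for every B ∈ 𝓑. Then f(x) ∈ c_𝓑(f, Y); moreover, if c_𝓑(f, Y) is a singleton, then x ∈ F(x), i.e. x is a fixed point of F. -/

import Mathlib

/-- For an entourage `B ⊆ X × X` and `x : X`, `entBall B x = {y | (x, y) ∈ B}`. -/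
def entBall {X : Type*} (B : Set (X × X)) (x : X) : Set X := {y | (x, y) ∈ B}

/-- The centre `c_𝓑(A)` of a set `A ⊆ X`: points `x` with
`⋂ {B ∈ 𝓑 : A ⊆ B(z) for some z} = ⋂ {B ∈ 𝓑 : A ⊆ B(x)}`. -/
def centreSet {X : Type*} (𝓑 : Set (Set (X × X))) (A : Set X) : Set X :=
  {x | ⋂₀ {B ∈ 𝓑 | ∃ z : X, A ⊆ entBall B z} = ⋂₀ {B ∈ 𝓑 | A ⊆ entBall B x}}

/-- The centre `c_𝓑(f, Y)` of a mapping `f : X → X` on `Y ⊆ X`. -/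
def centreMap {X : Type*} (𝓑 : Set (Set (X × X))) (f : X → X) (Y : Set X) : Set X :=
  {x | ⋂₀ {B ∈ 𝓑 | ∃ n : ℕ, ∃ z : X, f^[n] '' Y ⊆ entBall B z} =
       ⋂₀ {B ∈ 𝓑 | ∃ n : ℕ, f^[n] '' Y ⊆ entBall B x}}

/-- Theorem 7: let `(X, 𝓑)` be a primitive uniform space and `F : X → 2^X`
a multivalued mapping with nonempty values such that each `c_𝓑(F(x))` is a singleton `{f x}`
contained in `F(x)`. If `Y ⊆ X` is nonempty, `f(Y) ⊆ Y`, `x ∈ c_𝓑(f, Y)` and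
`f(Y ∩ B(x)) ⊆ B(f(x))` for every `B ∈ 𝓑`, then `f(x) ∈ c_𝓑(f, Y)`; and if `c_𝓑(f, Y)` is
a singleton, then `x ∈ F(x)`. -/
theorem stmt2 {X : Type*} [Nonempty X] (𝓑 : Set (Set (X × X)))
    (hUniv : (Set.univ : Set (X × X)) ∈ 𝓑)
    (F : X → Set X) (hFne : ∀ x, (F x).Nonempty)
    (f : X → X) (hfc : ∀ x, centreSet 𝓑 (F x) = {f x}) (hfF : ∀ x, f x ∈ F x)
    (Y : Set X) (hY : Y.Nonempty) (hfY : f '' Y ⊆ Y)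
    (x : X) (hx : x ∈ centreMap 𝓑 f Y)
    (hB : ∀ B ∈ 𝓑, f '' (Y ∩ entBall B x) ⊆ entBall B (f x)) :
    f x ∈ centreMap 𝓑 f Y ∧
      ((∃ w, centreMap 𝓑 f Y = {w}) → x ∈ F x) := by
  have hYn : ∀ n, f^[n] '' Y ⊆ Y := by
    intro n
    induction n with
    | zero => simp
    | succ n ih =>
      rw [Function.iterate_succ', Set.image_comp]
      exact (Set.image_mono (f := f) ih).trans hfY
  have key : {B ∈ 𝓑 | ∃ n, f^[n] '' Y ⊆ entBall B x} ⊆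
      {B ∈ 𝓑 | ∃ n, f^[n] '' Y ⊆ entBall B (f x)} := by
    rintro B ⟨hB𝓑, n, hn⟩
    refine ⟨hB𝓑, n + 1, ?_⟩
    rw [Function.iterate_succ', Set.image_comp]
    exact (Set.image_mono (f := f) (Set.subset_inter (hYn n) hn)).trans (hB B hB𝓑)
  have hsubS : ∀ y : X, {B ∈ 𝓑 | ∃ n, f^[n] '' Y ⊆ entBall B y} ⊆
      {B ∈ 𝓑 | ∃ n : ℕ, ∃ z : X, f^[n] '' Y ⊆ entBall B z} := by
    rintro y B ⟨h1, n, h2⟩; exact ⟨h1, n, y, h2⟩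
  have hx' : ⋂₀ {B ∈ 𝓑 | ∃ n : ℕ, ∃ z : X, f^[n] '' Y ⊆ entBall B z} =
      ⋂₀ {B ∈ 𝓑 | ∃ n, f^[n] '' Y ⊆ entBall B x} := hx
  have hfx : f x ∈ centreMap 𝓑 f Y := by
    have h1 := Set.sInter_subset_sInter (hsubS (f x))
    have h2 := Set.sInter_subset_sInter key
    exact Set.Subset.antisymm h1 (h2.trans hx'.ge)
  refine ⟨hfx, ?_⟩
  rintro ⟨w, hw⟩
  have h1 : x = w := by rw [hw] at hx; exact hx
  have h2 : f x = w := by rw [hw] at hfx; exact hfx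
  have h3 : x = f x := h1.trans h2.symm
  have h4 := hfF x
  rwa [← h3] at h4
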